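/- Let G ≤ H be finite groups and X a finite G-set, and let Δ_K ⊂ Yⁿ denote the 'big K-diagonal' of n-tuples with at least two coordinates in the same K-orbit. Then (ind_G^H X)ⁿ \ Δ_H is H_n-equivariantly isomorphic to ind_{G_n}^{H_n}(Xⁿ \ Δ_G), where G_n, H_n are the wreath products acting on the Cartesian powers. -/

import Mathlib

section Ind
variable {K H : Type*} [Group K] [Group H]

/-- The equivalence relation on `H × X` defining the induced `H`-set of a `K`-set `X`
along a homomorphism `f : K →* H`:
`(h₁,x₁) ∼ (h₂,x₂)` iff `∃ g, h₂ = h₁ (f g)⁻¹` and `x₂ = g • x₁`. -/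
def indSetoid (f : K →* H) (X : Type*) [MulAction K X] : Setoid (H × X) where
  r p q := ∃ g : K, q.1 = p.1 * (f g)⁻¹ ∧ q.2 = g • p.2
  iseqv := by
    constructor
    · exact fun p => ⟨1, by simp⟩
    · rintro p q ⟨g, h1, h2⟩
      exact ⟨g⁻¹, by simp [h1, mul_assoc], by simp [h2]⟩
    · rintro p q r ⟨g, h1, h2⟩ ⟨g', h1', h2'⟩
      exact ⟨g' * g, by simp [h1, h1', mul_assoc], by simp [h2, h2', mul_smul]⟩

/-- The induced `H`-set `ind_K^H X = (H × X)/∼`. -/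
def Ind (f : K →* H) (X : Type*) [MulAction K X] : Type _ := Quotient (indSetoid f X)

/-- `H` acts on the induced set by left multiplication on the first coordinate. -/
instance Ind.mulAction (f : K →* H) (X : Type*) [MulAction K X] :
    MulAction H (Ind f X) where
  smul h := Quotient.map (fun p => (h * p.1, p.2))
    (by rintro p q ⟨g, h1, h2⟩; exact ⟨g, by simp [h1, mul_assoc], h2⟩)
  one_smul x := by
    refine Quotient.inductionOn x (fun p => ?_)
    show Quotient.map _ _ _ = _
    simp
  mul_smul a b x := by
    refine Quotient.inductionOn x (fun p => ?_)
    show Quotient.map _ _ _ = Quotient.map _ _ (Quotient.map _ _ _)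
    simp [mul_assoc]

end Ind
section Wreath

variable (G : Type*) [Group G] (ι : Type*)

/-- Permutations of `ι` act on `ι → G` by automorphisms (permuting the factors). -/
def permAut : Equiv.Perm ι →* MulAut (ι → G) where
  toFun σ :=
    { toEquiv := Equiv.arrowCongr σ (Equiv.refl G)
      map_mul' := fun v w => rfl }
  map_one' := by ext v i; rfl
  map_mul' σ τ := by ext v i; rfl

/-- The wreath product `G_ι = G^ι ⋊ Perm ι`. -/
def Wr : Type _ := (ι → G) ⋊[permAut G ι] Equiv.Perm ι

instance : Group (Wr G ι) := inferInstanceAs (Group ((ι → G) ⋊[permAut G ι] Equiv.Perm ι))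

variable {G ι}

/-- The `G^ι`-component of an element of the wreath product. -/
def Wr.l (w : Wr G ι) : ι → G := SemidirectProduct.left w

/-- The `Perm ι`-component of an element of the wreath product. -/
def Wr.p (w : Wr G ι) : Equiv.Perm ι := SemidirectProduct.right w

/-- Building an element of the wreath product from its two components. -/
def Wr.mk (v : ι → G) (σ : Equiv.Perm ι) : Wr G ι := ⟨v, σ⟩

@[simp] lemma Wr.l_mk (v : ι → G) (σ : Equiv.Perm ι) : (Wr.mk v σ).l = v := rfl
@[simp] lemma Wr.p_mk (v : ι → G) (σ : Equiv.Perm ι) : (Wr.mk v σ).p = σ := rfl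
@[simp] lemma Wr.l_one : (1 : Wr G ι).l = 1 := rfl
@[simp] lemma Wr.p_one : (1 : Wr G ι).p = 1 := rfl
@[simp] lemma Wr.l_mul (a b : Wr G ι) : (a * b).l = a.l * fun i => b.l (a.p.symm i) := rfl
@[simp] lemma Wr.p_mul (a b : Wr G ι) : (a * b).p = a.p * b.p := rfl

variable (G ι)

/-- The natural action of the wreath product `G_ι` on `X^ι`:
`S_ι` permutes the factors and `G^ι` acts componentwise. -/
instance wrAction (X : Type*) [MulAction G X] : MulAction (Wr G ι) (ι → X) where
  smul w y := fun i => w.l i • y (w.p.symm i)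
  one_smul y := funext fun i => by
    show (1 : Wr G ι).l i • y ((1 : Wr G ι).p.symm i) = y i
    simp; rfl
  mul_smul a b y := funext fun i => by
    show (a * b).l i • y ((a * b).p.symm i) =
      a.l i • b.l (a.p.symm i) • y (b.p.symm (a.p.symm i))
    rw [Wr.l_mul, Wr.p_mul, Pi.mul_apply, mul_smul]
    rfl

@[simp] lemma wr_smul_apply {X : Type*} [MulAction G X] (w : Wr G ι) (y : ι → X) (i : ι) :
    (w • y) i = w.l i • y (w.p.symm i) := rfl

end Wreath
section WreathHoms

@[simp] lemma Wr.mk_mul {G : Type*} [Group G] {ι : Type*} (v w : ι → G)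
    (σ τ : Equiv.Perm ι) :
    Wr.mk v σ * Wr.mk w τ = Wr.mk (fun i => v i * w (σ.symm i)) (σ * τ) := rfl

@[simp] lemma Wr.left_mk {G : Type*} [Group G] {ι : Type*} (v : ι → G) (σ : Equiv.Perm ι) :
    SemidirectProduct.left (Wr.mk v σ) = v := rfl

@[simp] lemma Wr.right_mk {G : Type*} [Group G] {ι : Type*} (v : ι → G) (σ : Equiv.Perm ι) :
    SemidirectProduct.right (Wr.mk v σ) = σ := rfl

variable (G : Type*) [Group G]

/-- The natural embedding `G_ι × G_κ → G_{ι ⊕ κ}` of wreath products. -/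
def wrJoin (ι κ : Type*) : Wr G ι × Wr G κ →* Wr G (ι ⊕ κ) where
  toFun p := Wr.mk (Sum.elim p.1.l p.2.l) (Equiv.Perm.sumCongrHom ι κ (p.1.p, p.2.p))
  map_one' := by
    apply SemidirectProduct.ext
    · funext i; cases i <;> rfl
    · show Equiv.Perm.sumCongrHom ι κ (1, 1) = 1
      exact map_one _
  map_mul' p q := by
    show Wr.mk _ _ = Wr.mk _ _ * Wr.mk _ _
    rw [Wr.mk_mul]
    apply SemidirectProduct.ext
    · funext i
      cases i with
      | inl a =>
          show (p.1.l * fun i => q.1.l (p.1.p.symm i)) a = _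
          simp [Equiv.Perm.sumCongrHom]
      | inr b =>
          show (p.2.l * fun i => q.2.l (p.2.p.symm i)) b = _
          simp [Equiv.Perm.sumCongrHom]
    · exact map_mul (Equiv.Perm.sumCongrHom ι κ) (p.1.p, p.2.p) (q.1.p, q.2.p)

/-- Transport of wreath products along a bijection of index sets. -/
def wrCongrHom {ι κ : Type*} (e : ι ≃ κ) : Wr G ι →* Wr G κ where
  toFun w := Wr.mk (w.l ∘ e.symm) (e.permCongr w.p)
  map_one' := by
    apply SemidirectProduct.ext
    · rfl
    · show e.permCongr 1 = 1
      ext x; simp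
  map_mul' a b := by
    show Wr.mk _ _ = Wr.mk _ _ * Wr.mk _ _
    rw [Wr.mk_mul]
    apply SemidirectProduct.ext
    · funext i
      show (a.l * fun i => b.l (a.p.symm i)) (e.symm i) = _
      simp [Equiv.permCongr, Equiv.equivCongr]
    · ext x
      simp [Equiv.permCongr, Equiv.equivCongr, Equiv.Perm.mul_apply]

/-- The homomorphism of wreath products `K_ι → H_ι` induced by `f : K →* H`. -/
def wrMapHom {K H : Type*} [Group K] [Group H] (f : K →* H) (ι : Type*) :
    Wr K ι →* Wr H ι where
  toFun w := Wr.mk (f ∘ w.l) w.p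
  map_one' := by
    apply SemidirectProduct.ext
    · funext i; exact map_one f
    · rfl
  map_mul' a b := by
    show Wr.mk _ _ = Wr.mk _ _ * Wr.mk _ _
    rw [Wr.mk_mul]
    apply SemidirectProduct.ext
    · funext i
      show f ((a.l * fun i => b.l (a.p.symm i)) i) = _
      simp
    · rfl

variable (ι : Type*)

/-- The big `G`-diagonal in `X^ι`: tuples with two coordinates in the same `G`-orbit. -/
def bigDiag (X : Type*) [MulAction G X] : Set (ι → X) :=
  {y | ∃ i j, i ≠ j ∧ y i ∈ MulAction.orbit G (y j)}

/-- The wreath product `G_ι` acts on the complement of the big diagonal in `X^ι`. -/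
instance wrDiagAction (X : Type*) [MulAction G X] :
    MulAction (Wr G ι) {y : ι → X // y ∉ bigDiag G ι X} where
  smul w y := ⟨w • (y : ι → X), by
    rintro ⟨i, j, hij, g, hg⟩
    apply y.2
    refine ⟨w.p.symm i, w.p.symm j, fun h => hij (by simpa using congrArg w.p h), ?_⟩
    refine ⟨(w.l i)⁻¹ * g * w.l j, ?_⟩
    have hg' : g • (w.l j • (y : ι → X) (w.p.symm j)) = w.l i • (y : ι → X) (w.p.symm i) := hg
    calc ((w.l i)⁻¹ * g * w.l j) • (y : ι → X) (w.p.symm j)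
        = (w.l i)⁻¹ • g • w.l j • (y : ι → X) (w.p.symm j) := by
          rw [mul_smul, mul_smul]
      _ = (y : ι → X) (w.p.symm i) := by rw [hg', inv_smul_smul]⟩
  one_smul y := Subtype.ext (one_smul _ (y : ι → X))
  mul_smul a b y := Subtype.ext (mul_smul a b (y : ι → X))

end WreathHoms

section MainProof

variable {H : Type} [Group H] (G : Subgroup H) {X : Type} [MulAction G X] {n : ℕ}

/-- The canonical quotient map `H × X → Ind G.subtype X`. -/
def indMk (p : H × X) : Ind G.subtype X := Quotient.mk (indSetoid G.subtype X) p

/-- The canonical map `X → Ind G.subtype X`, applied componentwise. -/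
def innerTuple (x : Fin n → X) : Fin n → Ind G.subtype X :=
  fun i => indMk G ((1 : H), x i)

lemma smul_ind_mk (h : H) (p : H × X) :
    h • indMk G p = indMk G (h * p.1, p.2) := rfl

lemma innerTuple_notDiag {x : Fin n → X} (hx : x ∉ bigDiag G (Fin n) X) :
    innerTuple G x ∉ bigDiag H (Fin n) (Ind G.subtype X) := by
  rintro ⟨i, j, hij, h, hh⟩
  apply hx
  refine ⟨i, j, hij, ?_⟩
  have := Quotient.exact ((smul_ind_mk G h (1, x j)).symm.trans hh)
  obtain ⟨g, _, hg2⟩ := this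
  exact ⟨g, hg2.symm⟩

lemma wrMap_smul_innerTuple (g : Wr G (Fin n)) (x : Fin n → X) :
    (wrMapHom G.subtype (Fin n) g) • innerTuple G x = innerTuple G (g • x) := by
  funext i
  show (wrMapHom G.subtype (Fin n) g).l i •
      innerTuple G x ((wrMapHom G.subtype (Fin n) g).p.symm i) = _
  have hl : (wrMapHom G.subtype (Fin n) g).l = G.subtype ∘ g.l := rfl
  have hp : (wrMapHom G.subtype (Fin n) g).p = g.p := rfl
  rw [hl, hp]
  show indMk G (G.subtype (g.l i) * 1, x (g.p.symm i)) =
    indMk G (1, g.l i • x (g.p.symm i))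
  exact Quotient.sound ⟨g.l i, by simp, rfl⟩

/-- The subtype-valued version of `innerTuple`, acted on by `w`. -/
def psi0 (p : Wr H (Fin n) × {x : Fin n → X // x ∉ bigDiag G (Fin n) X}) :
    {y : Fin n → Ind G.subtype X // y ∉ bigDiag H (Fin n) (Ind G.subtype X)} :=
  p.1 • ⟨innerTuple G p.2.1, innerTuple_notDiag G p.2.2⟩

lemma psi0_coe (w : Wr H (Fin n)) (x : {x : Fin n → X // x ∉ bigDiag G (Fin n) X}) :
    (psi0 G (w, x)).1 = w • innerTuple G x.1 := rfl

/-- The equivariant map from the induced set to the complement of the big diagonal. -/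
def psi : Ind (wrMapHom G.subtype (Fin n)) {x : Fin n → X // x ∉ bigDiag G (Fin n) X} →
    {y : Fin n → Ind G.subtype X // y ∉ bigDiag H (Fin n) (Ind G.subtype X)} :=
  Quotient.lift (psi0 G) (by
    rintro ⟨w, x⟩ ⟨w', x'⟩ ⟨g, h1, h2⟩
    dsimp only at h1 h2
    subst h1 h2
    apply Subtype.ext
    rw [psi0_coe, psi0_coe]
    show w • innerTuple G x.1 =
      (w * (wrMapHom G.subtype (Fin n) g)⁻¹) • innerTuple G (g • x.1)
    rw [← wrMap_smul_innerTuple, ← mul_smul]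
    simp)

lemma psi_mk (w : Wr H (Fin n)) (x : {x : Fin n → X // x ∉ bigDiag G (Fin n) X}) :
    psi G (Quotient.mk _ (w, x)) = psi0 G (w, x) := rfl

lemma psi_equivariant (w : Wr H (Fin n))
    (z : Ind (wrMapHom G.subtype (Fin n)) {x : Fin n → X // x ∉ bigDiag G (Fin n) X}) :
    psi G (w • z) = w • psi G z := by
  refine Quotient.inductionOn z (fun p => ?_)
  show psi G (Quotient.mk _ (w * p.1, p.2)) = _
  rw [psi_mk, psi_mk]
  show (w * p.1) • _ = w • (p.1 • _)
  rw [mul_smul]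

lemma psi_injective : Function.Injective (psi (n := n) (X := X) G) := by
  intro z z'
  refine Quotient.inductionOn₂ z z' (fun p q hpq => ?_)
  obtain ⟨w, x⟩ := p
  obtain ⟨w', x'⟩ := q
  have hcoord : ∀ i, (w • innerTuple G x.1) i = (w' • innerTuple G x'.1) i := by
    intro i
    have := congrArg Subtype.val hpq
    rw [psi_mk, psi_mk, psi0_coe, psi0_coe] at this
    exact congrFun this i
  have hex : ∀ i, ∃ g : G, w'.l i = w.l i * (G.subtype g)⁻¹ ∧
      x'.1 (w'.p.symm i) = g • x.1 (w.p.symm i) := by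
    intro i
    obtain ⟨g, hg1, hg2⟩ := Quotient.exact (hcoord i)
    exact ⟨g, by simpa using hg1, by simpa using hg2⟩
  choose g hg1 hg2 using hex
  refine Quotient.sound ⟨Wr.mk (fun j => g (w'.p j)) (w'.p⁻¹ * w.p), ?_, ?_⟩
  · -- w' = w * (wrMapHom gg)⁻¹
    rw [eq_mul_inv_iff_mul_eq]
    apply SemidirectProduct.ext
    · funext i
      show w'.l i * (G.subtype ∘ (fun j => g (w'.p j))) (w'.p.symm i) = w.l i
      simp only [Function.comp_apply, Equiv.apply_symm_apply]
      rw [hg1 i]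
      group
    · show w'.p * (w'.p⁻¹ * w.p) = w.p
      group
  · apply Subtype.ext
    funext j
    show x'.1 j = g (w'.p j) • x.1 ((w'.p⁻¹ * w.p).symm j)
    have hσ : (w'.p⁻¹ * w.p).symm j = w.p.symm (w'.p j) := by
      rw [Equiv.symm_apply_eq]
      simp [Equiv.Perm.mul_apply]
    rw [hσ]
    have h := hg2 (w'.p j)
    rw [Equiv.symm_apply_apply] at h
    exact h

lemma psi_surjective : Function.Surjective (psi (n := n) (X := X) G) := by
  intro y
  set p : Fin n → H × X := fun i => (y.1 i).out with hp
  have hrep : ∀ i, indMk G (p i) = y.1 i :=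
    fun i => Quotient.out_eq (y.1 i)
  have hx : (fun i => (p i).2) ∉ bigDiag G (Fin n) X := by
    rintro ⟨i, j, hij, g, hgij⟩
    apply y.2
    refine ⟨i, j, hij, (p i).1 * (G.subtype g) * ((p j).1)⁻¹, ?_⟩
    show ((p i).1 * (G.subtype g) * ((p j).1)⁻¹) • y.1 j = y.1 i
    rw [← hrep i, ← hrep j, smul_ind_mk]
    apply Quotient.sound
    refine ⟨g, ?_, ?_⟩
    · show (p i).1 = (p i).1 * (G.subtype g) * ((p j).1)⁻¹ * (p j).1 * (G.subtype g)⁻¹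
      group
    · exact (by simpa using hgij : g • (p j).2 = (p i).2).symm
  refine ⟨Quotient.mk _ (Wr.mk (fun i => (p i).1) 1, ⟨fun i => (p i).2, hx⟩), ?_⟩
  rw [psi_mk]
  apply Subtype.ext
  rw [psi0_coe]
  funext i
  show (Wr.mk (fun i => (p i).1) 1).l i •
      innerTuple G (fun i => (p i).2) ((Wr.mk (fun i => (p i).1) 1).p.symm i) = y.1 i
  rw [Wr.l_mk, Wr.p_mk]
  show (p i).1 • indMk G (1, (p ((1 : Equiv.Perm (Fin n)).symm i)).2) = y.1 i
  rw [smul_ind_mk]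
  show indMk G ((p i).1 * 1, (p i).2) = y.1 i
  rw [mul_one]
  exact hrep i

end MainProof
theorem power_of_induced_minus_diagonal_is_induced
    (H : Type) [Group H] [Finite H] (G : Subgroup H) (X : Type) [MulAction G X] [Finite X]
    (n : ℕ) :
    ∃ e : {y : Fin n → Ind G.subtype X // y ∉ bigDiag H (Fin n) (Ind G.subtype X)} ≃
        Ind (wrMapHom G.subtype (Fin n)) {y : Fin n → X // y ∉ bigDiag G (Fin n) X},
      ∀ (w : Wr H (Fin n)) y, e (w • y) = w • e y := by
  set E := Equiv.ofBijective (psi (n := n) (X := X) G)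
    ⟨psi_injective G, psi_surjective G⟩ with hE
  refine ⟨E.symm, fun w y => ?_⟩
  rw [Equiv.symm_apply_eq]
  have hcoe : ∀ z, E z = psi G z := fun z => rfl
  rw [hcoe, psi_equivariant, ← hcoe, Equiv.apply_symm_apply]
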